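/- For any positive programs P, Q over a finite universe U and any alphabets H, B ⊆ U: P ≡_{⟨H,B⟩} Q holds if and only if P and Q have the same H-total models. In particular, for positive programs, ⟨H,B⟩-equivalence does not depend on B. -/
import Mathlib


structure Rule (α : Type*) where
  head : Finset α
  pbody : Finset α
  nbody : Finset α
deriving DecidableEq

abbrev Program (α : Type*) := Finset (Rule α)

variable {α : Type*} [DecidableEq α]

/-- An interpretation `Y` satisfies a rule. -/
def satRule (Y : Finset α) (r : Rule α) : Prop :=
  r.pbody ⊆ Y → r.nbody ∩ Y = ∅ → (r.head ∩ Y).Nonempty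

/-- `Y` is a model of the program `P`. -/
def satProg (Y : Finset α) (P : Program α) : Prop := ∀ r ∈ P, satRule Y r

/-- The Gelfond–Lifschitz reduct `P^Y`. -/
def reduct (P : Program α) (Y : Finset α) : Program α :=
  (P.filter (fun r => r.nbody ∩ Y = ∅)).image (fun r => ⟨r.head, r.pbody, ∅⟩)

/-- `Y` is an answer set of `P`: a minimal model of `P^Y`. -/
def isAS (P : Program α) (Y : Finset α) : Prop :=
  satProg Y (reduct P Y) ∧ ∀ Z, Z ⊂ Y → ¬ satProg Z (reduct P Y)

def heads (P : Program α) : Finset α := P.biUnion Rule.head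
def bodies (P : Program α) : Finset α := P.biUnion (fun r => r.pbody ∪ r.nbody)

/-- A positive program: no default negation. -/
def Positive (P : Program α) : Prop := ∀ r ∈ P, r.nbody = ∅

/-- A unary program: only facts `a ←` and rules `a ← b`. -/
def Unary (P : Program α) : Prop :=
  ∀ r ∈ P, r.nbody = ∅ ∧ r.head.card = 1 ∧ r.pbody.card ≤ 1

/-- Membership in the class `C_⟨H,B⟩`. -/
def inClass (H B : Finset α) (P : Program α) : Prop := heads P ⊆ H ∧ bodies P ⊆ B

/-- `V ⪯_H^B Z`. -/
def preceq (H B V Z : Finset α) : Prop := V ∩ H ⊆ Z ∩ H ∧ Z ∩ B ⊆ V ∩ B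

/-- `V ≺_H^B Z`. -/
def prec (H B V Z : Finset α) : Prop := preceq H B V Z ∧ V ∩ (H ∪ B) ≠ Z ∩ (H ∪ B)

/-- `Y` is an `H`-total model of `P`. -/
def Htotal (H : Finset α) (P : Program α) (Y : Finset α) : Prop :=
  satProg Y P ∧ ∀ Z, Z ⊂ Y → satProg Z (reduct P Y) → Z ∩ H ⊂ Y ∩ H

/-- The containment `P ⊆_⟨H,B⟩ Q`. -/
def containsHB (H B : Finset α) (P Q : Program α) : Prop :=
  ∀ R : Program α, inClass H B R → ∀ Y, isAS (P ∪ R) Y → isAS (Q ∪ R) Y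

/-- The equivalence `P ≡_⟨H,B⟩ Q`. -/
def equivHB (H B : Finset α) (P Q : Program α) : Prop :=
  ∀ R : Program α, inClass H B R → ∀ Y, isAS (P ∪ R) Y ↔ isAS (Q ∪ R) Y

/-- A witness against `P ⊆_⟨H,B⟩ Q`. -/
def Witness (H B : Finset α) (P Q : Program α) (X Y : Finset α) : Prop :=
  X ⊆ Y ∧ Htotal H P Y ∧
    (satProg Y Q → X ⊂ Y ∧ satProg X (reduct Q Y) ∧
      ∀ X', preceq H B X X' → X' ⊂ Y → ¬ satProg X' (reduct P Y))

/-- `(X,Y)` is `⪯_H^B`-maximal for `P`. -/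
def maximalHB (H B : Finset α) (P : Program α) (X Y : Finset α) : Prop :=
  satProg X (reduct P Y) ∧ ∀ X', prec H B X X' → X' ⊂ Y → ¬ satProg X' (reduct P Y)

/-- `(X,Y)` is an `⟨H,B⟩`-model of `P`. -/
def HBmodel (H B : Finset α) (P : Program α) (X Y : Finset α) : Prop :=
  X ⊆ Y ∧ Htotal H P Y ∧
    (X ⊂ Y → ∃ X', X' ⊂ Y ∧ X' ∩ (H ∪ B) = X ∧ maximalHB H B P X' Y)

lemma reduct_union (P R : Program α) (Y : Finset α) :
    reduct (P ∪ R) Y = reduct P Y ∪ reduct R Y := by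
  simp [reduct, Finset.filter_union, Finset.image_union]

lemma reduct_positive {P : Program α} (hP : Positive P) (Y : Finset α) :
    reduct P Y = P := by
  unfold reduct
  rw [Finset.filter_true_of_mem (fun r hr => by simp [hP r hr])]
  ext r
  simp only [Finset.mem_image]
  constructor
  · rintro ⟨s, hs, rfl⟩
    have h := hP s hs
    cases s; simp_all
  · intro hr
    exact ⟨r, hr, by have := hP r hr; cases r; simp_all⟩

lemma satProg_union {Y : Finset α} {P Q : Program α} :
    satProg Y (P ∪ Q) ↔ satProg Y P ∧ satProg Y Q := by
  simp [satProg, Finset.mem_union, or_imp, forall_and]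

def facts (A : Finset α) : Program α := A.image fun a => ⟨{a}, ∅, ∅⟩

lemma satProg_facts {Z A : Finset α} : satProg Z (facts A) ↔ A ⊆ Z := by
  simp only [satProg, facts, Finset.mem_image, forall_exists_index, and_imp]
  constructor
  · intro h a ha
    obtain ⟨b, hb⟩ := h _ a ha rfl (by simp) (by simp)
    simp only [Finset.mem_inter, Finset.mem_singleton] at hb
    exact hb.1 ▸ hb.2
  · rintro h r a ha rfl
    intro _ _
    exact ⟨a, by simp [h ha]⟩

lemma facts_positive (A : Finset α) : Positive (facts A) := by
  intro r hr
  simp only [facts, Finset.mem_image] at hr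
  obtain ⟨a, _, rfl⟩ := hr
  rfl

lemma heads_facts (A : Finset α) : heads (facts A) = A := by
  ext a
  simp only [heads, facts, Finset.mem_biUnion, Finset.mem_image]
  constructor
  · rintro ⟨r, ⟨b, hb, rfl⟩, h⟩
    simp at h; subst h; exact hb
  · intro ha
    exact ⟨⟨{a}, ∅, ∅⟩, ⟨a, ha, rfl⟩, by simp⟩

lemma bodies_facts (A : Finset α) : bodies (facts A) = ∅ := by
  ext a
  simp [bodies, facts]

lemma exists_minimal_model (Pr : Program α) (Z : Finset α) (h : satProg Z Pr) :
    ∃ M, M ⊆ Z ∧ satProg M Pr ∧ ∀ N, N ⊂ M → ¬ satProg N Pr := by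
  classical
  obtain ⟨M, hM, hmin⟩ := Finset.exists_min_image
    (Z.powerset.filter (fun M => satProg M Pr)) Finset.card
    ⟨Z, by simp [h]⟩
  simp only [Finset.mem_filter, Finset.mem_powerset] at hM
  refine ⟨M, hM.1, hM.2, fun N hN hsat => ?_⟩
  have hNs : N ∈ Z.powerset.filter (fun M => satProg M Pr) := by
    simp only [Finset.mem_filter, Finset.mem_powerset]
    exact ⟨hN.subset.trans hM.1, hsat⟩
  exact absurd (hmin N hNs) (not_le.mpr (Finset.card_lt_card hN))

lemma sat_reduct_shrink {H : Finset α} {R : Program α} (hH : heads R ⊆ H)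
    {Y Z M : Finset α} (hZ : satProg Z (reduct R Y)) (hMZ : M ⊆ Z)
    (hHM : Z ∩ H ⊆ M) : satProg M (reduct R Y) := by
  intro r' hr'
  simp only [reduct, Finset.mem_image, Finset.mem_filter] at hr'
  obtain ⟨r, ⟨hrR, hrn⟩, rfl⟩ := hr'
  intro hb _
  have hsat := hZ ⟨r.head, r.pbody, ∅⟩
    (by simp only [reduct, Finset.mem_image, Finset.mem_filter]; exact ⟨r, ⟨hrR, hrn⟩, rfl⟩)
  obtain ⟨a, ha⟩ := hsat (hb.trans hMZ) (by simp)
  simp only [Finset.mem_inter] at ha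
  have haH : a ∈ H := hH (Finset.mem_biUnion.mpr ⟨r, hrR, ha.1⟩)
  exact ⟨a, Finset.mem_inter.mpr ⟨ha.1, hHM (Finset.mem_inter.mpr ⟨ha.2, haH⟩)⟩⟩

lemma htotal_of_isAS {H : Finset α} {P R : Program α} (hP : Positive P)
    (hH : heads R ⊆ H) {Y : Finset α} (hY : isAS (P ∪ R) Y) : Htotal H P Y := by
  obtain ⟨hY1, hY2⟩ := hY
  rw [reduct_union, reduct_positive hP, satProg_union] at hY1
  refine ⟨hY1.1, fun Z hZY hZP => ?_⟩
  rw [reduct_positive hP] at hZP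
  rw [Finset.ssubset_iff_subset_ne]
  refine ⟨Finset.inter_subset_inter hZY.subset (Finset.Subset.refl _), fun heq => ?_⟩
  have hHZ : Y ∩ H ⊆ Z := by rw [← heq]; exact Finset.inter_subset_left
  have hZR : satProg Z (reduct R Y) := sat_reduct_shrink hH hY1.2 hZY.subset hHZ
  have := hY2 Z hZY
  rw [reduct_union, reduct_positive hP] at this
  exact this (satProg_union.mpr ⟨hZP, hZR⟩)

lemma contains_of_same {P Q : Program α} {H : Finset α}
    (hP : Positive P) (hQ : Positive Q)
    (hsame : ∀ Y, Htotal H P Y ↔ Htotal H Q Y)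
    {R : Program α} (hH : heads R ⊆ H) {Y : Finset α}
    (hY : isAS (P ∪ R) Y) : isAS (Q ∪ R) Y := by
  have hHtQ : Htotal H Q Y := (hsame Y).mp (htotal_of_isAS hP hH hY)
  obtain ⟨hY1, hY2⟩ := hY
  rw [reduct_union, reduct_positive hP, satProg_union] at hY1
  have hY2' : ∀ Z, Z ⊂ Y → ¬ satProg Z (P ∪ reduct R Y) := by
    intro Z hZ
    have := hY2 Z hZ
    rwa [reduct_union, reduct_positive hP] at this
  constructor
  · rw [reduct_union, reduct_positive hQ, satProg_union]
    exact ⟨hHtQ.1, hY1.2⟩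
  · intro Z hZY hZsat
    rw [reduct_union, reduct_positive hQ, satProg_union] at hZsat
    obtain ⟨hZQ, hZR⟩ := hZsat
    have hZS : satProg Z (Q ∪ facts (Z ∩ H)) :=
      satProg_union.mpr ⟨hZQ, satProg_facts.mpr Finset.inter_subset_left⟩
    obtain ⟨M, hMZ, hM, hMmin⟩ := exists_minimal_model _ Z hZS
    rw [satProg_union] at hM
    have hZHM : Z ∩ H ⊆ M := satProg_facts.mp hM.2
    have hMt : Htotal H Q M := by
      refine ⟨hM.1, fun N hNM hNQ => ?_⟩
      rw [reduct_positive hQ] at hNQ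
      rw [Finset.ssubset_iff_subset_ne]
      refine ⟨Finset.inter_subset_inter hNM.subset (Finset.Subset.refl _), fun heq => ?_⟩
      apply hMmin N hNM
      rw [satProg_union]
      refine ⟨hNQ, satProg_facts.mpr fun a ha => ?_⟩
      have haM : a ∈ M ∩ H :=
        Finset.mem_inter.mpr ⟨hZHM ha, (Finset.mem_inter.mp ha).2⟩
      rw [← heq] at haM
      exact (Finset.mem_inter.mp haM).1
    have hMtP : Htotal H P M := (hsame M).mpr hMt
    have hMR : satProg M (reduct R Y) := sat_reduct_shrink hH hZR hMZ hZHM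
    exact hY2' M (lt_of_le_of_lt hMZ hZY) (satProg_union.mpr ⟨hMtP.1, hMR⟩)


lemma htotal_imp_of_equiv {P Q : Program α} {H B : Finset α}
    (hP : Positive P) (hQ : Positive Q) (he : equivHB H B P Q)
    {Y : Finset α} (hY : Htotal H P Y) : Htotal H Q Y := by
  set R := facts (Y ∩ H) with hR
  have hRclass : inClass H B R :=
    ⟨by rw [hR, heads_facts]; exact Finset.inter_subset_right,
     by rw [hR, bodies_facts]; exact Finset.empty_subset _⟩
  have hRpos : Positive R := facts_positive _
  have hAS : isAS (P ∪ R) Y := by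
    constructor
    · rw [reduct_union, reduct_positive hP, reduct_positive hRpos, satProg_union]
      exact ⟨hY.1, satProg_facts.mpr Finset.inter_subset_left⟩
    · intro Z hZY hZ
      rw [reduct_union, reduct_positive hP, reduct_positive hRpos, satProg_union] at hZ
      have h1 : Z ∩ H ⊂ Y ∩ H := hY.2 Z hZY (by rw [reduct_positive hP]; exact hZ.1)
      have h2 : Y ∩ H ⊆ Z := satProg_facts.mp hZ.2
      exact h1.not_subset (Finset.subset_inter h2 Finset.inter_subset_right)
  obtain ⟨hQ1, hQ2⟩ := (he R hRclass Y).mp hAS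
  rw [reduct_union, reduct_positive hQ, reduct_positive hRpos, satProg_union] at hQ1
  refine ⟨hQ1.1, fun Z hZY hZQ => ?_⟩
  rw [reduct_positive hQ] at hZQ
  rw [Finset.ssubset_iff_subset_ne]
  refine ⟨Finset.inter_subset_inter hZY.subset (Finset.Subset.refl _), fun heq => ?_⟩
  apply hQ2 Z hZY
  rw [reduct_union, reduct_positive hQ, reduct_positive hRpos, satProg_union]
  exact ⟨hZQ, satProg_facts.mpr (by rw [← heq]; exact Finset.inter_subset_left)⟩


theorem positive_equiv_iff_same_Htotal [Fintype α] (P Q : Program α)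
    (H B : Finset α) (hP : Positive P) (hQ : Positive Q) :
    equivHB H B P Q ↔ ∀ Y, Htotal H P Y ↔ Htotal H Q Y := by
  constructor
  · intro he Y
    exact ⟨htotal_imp_of_equiv hP hQ he,
      htotal_imp_of_equiv hQ hP (fun R hR Y => (he R hR Y).symm)⟩
  · intro hsame R hRclass Y
    exact ⟨contains_of_same hP hQ hsame hRclass.1,
      contains_of_same hQ hP (fun Y => (hsame Y).symm) hRclass.1⟩
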